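/- Let β ∈ [0,1). For all Θ = (θ_r)_{r=1}^m and Θ* = (θ_r*)_{r=1}^m in (ℝ^d)^m, L(Θ) + ∇_Θ L(Θ)ᵀ(Θ* − Θ) ≤ L(Θ*) + (K₂/m^β)·‖∇_f L(f_Θ)‖_{L1}·‖Θ* − Θ‖₂². -/

import Mathlib

open MeasureTheory Real Finset
open scoped RealInnerProductSpace BigOperators

noncomputable section

/-- Two-layer network `f_Θ(x) = m^{-β} ∑_r a_r σ(θ_rᵀ x)`. -/
def fnet (d m : ℕ) (β : ℝ) (σ : ℝ → ℝ) (a : Fin m → ℝ)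
    (Θ : Fin m → EuclideanSpace ℝ (Fin d)) (x : EuclideanSpace ℝ (Fin d)) : ℝ :=
  (m : ℝ) ^ (-β) * ∑ r, a r * σ ⟪Θ r, x⟫

/-- Functional-gradient value `g_Θ(x_i) = -y_i/(1+exp(y_i f_Θ(x_i)))`. -/
def gval (d m n : ℕ) (β : ℝ) (σ : ℝ → ℝ) (a : Fin m → ℝ)
    (x : Fin n → EuclideanSpace ℝ (Fin d)) (y : Fin n → ℝ)
    (Θ : Fin m → EuclideanSpace ℝ (Fin d)) (i : Fin n) : ℝ :=
  - y i / (1 + Real.exp (y i * fnet d m β σ a Θ (x i)))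

/-- Empirical logistic loss `L(Θ)`. -/
def eloss (d m n : ℕ) (β : ℝ) (σ : ℝ → ℝ) (a : Fin m → ℝ)
    (x : Fin n → EuclideanSpace ℝ (Fin d)) (y : Fin n → ℝ)
    (Θ : Fin m → EuclideanSpace ℝ (Fin d)) : ℝ :=
  (1 / n : ℝ) * ∑ i, Real.log (1 + Real.exp (- y i * fnet d m β σ a Θ (x i)))

/-- `L¹(ν_n)`-norm of the functional gradient. -/
def L1norm (d m n : ℕ) (β : ℝ) (σ : ℝ → ℝ) (a : Fin m → ℝ)
    (x : Fin n → EuclideanSpace ℝ (Fin d)) (y : Fin n → ℝ)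
    (Θ : Fin m → EuclideanSpace ℝ (Fin d)) : ℝ :=
  (1 / n : ℝ) * ∑ i, |gval d m n β σ a x y Θ i|

/-- Parameter gradient `∇_Θ L(Θ)`. -/
def gradL (d m n : ℕ) (β : ℝ) (σ : ℝ → ℝ) (a : Fin m → ℝ)
    (x : Fin n → EuclideanSpace ℝ (Fin d)) (y : Fin n → ℝ)
    (Θ : Fin m → EuclideanSpace ℝ (Fin d)) : Fin m → EuclideanSpace ℝ (Fin d) :=
  fun r => (1 / n : ℝ) • ∑ i,
    (gval d m n β σ a x y Θ i * (a r * (m : ℝ) ^ (-β) * deriv σ ⟪Θ r, x i⟫)) • x i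

/-- Squared Euclidean norm of a parameter block `‖Θ‖₂²`. -/
def nsq (d m : ℕ) (Θ : Fin m → EuclideanSpace ℝ (Fin d)) : ℝ := ∑ r, ‖Θ r‖ ^ 2

/-- Euclidean norm of a parameter block `‖Θ‖₂`. -/
def en2 (d m : ℕ) (Θ : Fin m → EuclideanSpace ℝ (Fin d)) : ℝ := Real.sqrt (nsq d m Θ)

/-- The `(2,1)`-norm `‖Θ‖_{2,1} = ∑_r ‖θ_r‖₂`. -/
def n21 (d m : ℕ) (Θ : Fin m → EuclideanSpace ℝ (Fin d)) : ℝ := ∑ r, ‖Θ r‖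

/-- Gradient-descent iterates `Θ^{(t+1)} = Θ^{(t)} - η ∇_Θ L(Θ^{(t)})`. -/
def gdSeq (d m n : ℕ) (β : ℝ) (σ : ℝ → ℝ) (a : Fin m → ℝ)
    (x : Fin n → EuclideanSpace ℝ (Fin d)) (y : Fin n → ℝ) (η : ℝ)
    (Θ0 : Fin m → EuclideanSpace ℝ (Fin d)) : ℕ → Fin m → EuclideanSpace ℝ (Fin d)
  | 0 => Θ0
  | t + 1 => fun r => gdSeq d m n β σ a x y η Θ0 t r
      - η • gradL d m n β σ a x y (gdSeq d m n β σ a x y η Θ0 t) r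

/-- Kernel-smoothing quantity `Q(Θ) = ‖(1/n) ∑_i g_Θ(x_i) ∇_Θ f_Θ(x_i)‖₂²`. -/
def Qker (d m n : ℕ) (β : ℝ) (σ : ℝ → ℝ) (a : Fin m → ℝ)
    (x : Fin n → EuclideanSpace ℝ (Fin d)) (y : Fin n → ℝ)
    (Θ : Fin m → EuclideanSpace ℝ (Fin d)) : ℝ :=
  nsq d m (fun r => (1 / n : ℝ) • ∑ i,
    (gval d m n β σ a x y Θ i * (a r * (m : ℝ) ^ (-β) * deriv σ ⟪Θ r, x i⟫)) • x i)

/-- Symmetric signs: `a_r = 1` for `r < k`, `a_r = -1` for `r ≥ k` (with `m = 2k`). -/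
def symSigns (k : ℕ) : Fin (2 * k) → ℝ := fun r => if (r : ℕ) < k then 1 else -1

/-- Symmetric initialization: `θ^{(0)}_{r+k} = θ^{(0)}_r` (with `m = 2k`). -/
def symInit (d k : ℕ) (ω : Fin k → EuclideanSpace ℝ (Fin d)) :
    Fin (2 * k) → EuclideanSpace ℝ (Fin d) :=
  fun r => if h : (r : ℕ) < k then ω ⟨r, h⟩ else ω ⟨(r : ℕ) - k, by have := r.isLt; omega⟩

/-- Ramp loss with margin `γ`. -/
def ramp (γ v : ℝ) : ℝ := if v < 0 then 1 else if v ≤ γ then 1 - v / γ else 0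

/-- Empirical Rademacher complexity of the ramp-loss class over the ball of radius `D`
around `Θ0`. -/
def rade (d m n : ℕ) (β γ D : ℝ) (σ : ℝ → ℝ) (a : Fin m → ℝ)
    (x : Fin n → EuclideanSpace ℝ (Fin d)) (y : Fin n → ℝ)
    (Θ0 : Fin m → EuclideanSpace ℝ (Fin d)) : ℝ :=
  (1 / n : ℝ) * (1 / 2 ^ n : ℝ) * ∑ ε : Fin n → Bool,
    sSup {z : ℝ | ∃ Θ : Fin m → EuclideanSpace ℝ (Fin d),
      en2 d m (fun r => Θ r - Θ0 r) ≤ D ∧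
      z = ∑ i, (if ε i then (1 : ℝ) else -1) * ramp γ (y i * fnet d m β σ a Θ (x i))}

/-- Neural tangent kernel. -/
def kNTK (d : ℕ) (σ : ℝ → ℝ) (μ₀ : Measure (EuclideanSpace ℝ (Fin d)))
    (x x' : EuclideanSpace ℝ (Fin d)) : ℝ :=
  ∫ θ, deriv σ ⟪θ, x⟫ * deriv σ ⟪θ, x'⟫ * ⟪x, x'⟫ ∂μ₀

section AuxAC


lemma logistic_tangent (u v : ℝ) :
    Real.log (1 + Real.exp u) + Real.exp u / (1 + Real.exp u) * (v - u)
      ≤ Real.log (1 + Real.exp v) := by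
  set φ : ℝ → ℝ := fun t => Real.log (1 + Real.exp t) with hφdef
  have hpos : ∀ t : ℝ, (0:ℝ) < 1 + Real.exp t := fun t => by positivity
  have hd : ∀ t : ℝ, HasDerivAt φ (Real.exp t / (1 + Real.exp t)) t := by
    intro t
    have h1 : HasDerivAt (fun s : ℝ => 1 + Real.exp s) (Real.exp t) t :=
      (Real.hasDerivAt_exp t).const_add 1
    simpa using h1.log (hpos t).ne'
  have hdiff : Differentiable ℝ φ := fun t => (hd t).differentiableAt
  have hderiv : deriv φ = fun t => Real.exp t / (1 + Real.exp t) :=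
    funext fun t => (hd t).deriv
  have hmono : Monotone (deriv φ) := by
    rw [hderiv]
    intro s t hst
    have hes : Real.exp s ≤ Real.exp t := Real.exp_le_exp.2 hst
    rw [div_le_div_iff₀ (hpos s) (hpos t)]
    nlinarith [Real.exp_pos s, Real.exp_pos t]
  have hconv : ConvexOn ℝ Set.univ φ := hmono.convexOn_univ_of_deriv hdiff
  rcases lt_trichotomy u v with h | h | h
  · have h1 := hconv.le_slope_of_hasDerivAt (Set.mem_univ u) (Set.mem_univ v) h (hd u)
    rw [slope_def_field] at h1
    have h2 := (le_div_iff₀ (by linarith : (0:ℝ) < v - u)).mp h1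
    linarith
  · subst h; simp
  · have h1 := hconv.slope_le_of_hasDerivAt (Set.mem_univ v) (Set.mem_univ u) h (hd u)
    rw [slope_def_field] at h1
    have h2 := (div_le_iff₀ (by linarith : (0:ℝ) < u - v)).mp h1
    linarith

lemma taylor_bd (σ : ℝ → ℝ) (K₂ : ℝ) (hσ : ContDiff ℝ 2 σ)
    (hK₂ : ∀ z, |deriv (deriv σ) z| ≤ K₂) (a b : ℝ) :
    |σ b - σ a - deriv σ a * (b - a)| ≤ K₂ * (b - a)^2 := by
  have hK0 : 0 ≤ K₂ := (abs_nonneg _).trans (hK₂ 0)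
  have hσ1 : Differentiable ℝ σ := hσ.differentiable (by norm_num)
  have hσ2 : ContDiff ℝ 1 (deriv σ) :=
    (contDiff_succ_iff_deriv.mp (show ContDiff ℝ (1+1) σ from by norm_num [hσ])).2.2
  have hdσ : Differentiable ℝ (deriv σ) := hσ2.differentiable (by norm_num)
  have hlipW : LipschitzWith K₂.toNNReal (deriv σ) := by
    refine lipschitzWith_of_nnnorm_deriv_le hdσ (fun z => ?_)
    rw [← NNReal.coe_le_coe, coe_nnnorm, Real.coe_toNNReal _ hK0, Real.norm_eq_abs]
    exact hK₂ z
  have hlip : ∀ c : ℝ, |deriv σ c - deriv σ a| ≤ K₂ * |c - a| := by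
    intro c
    have := hlipW.dist_le_mul c a
    rwa [Real.dist_eq, Real.dist_eq, Real.coe_toNNReal _ hK0] at this
  have key : ∀ c : ℝ, |c - a| ≤ |b - a| → σ b - σ a = deriv σ c * (b - a) →
      |σ b - σ a - deriv σ a * (b - a)| ≤ K₂ * (b - a)^2 := by
    intro c hca hs
    have h1 : σ b - σ a - deriv σ a * (b - a) = (deriv σ c - deriv σ a) * (b - a) := by
      rw [hs]; ring
    rw [h1, abs_mul]
    have h2 : |deriv σ c - deriv σ a| ≤ K₂ * |b - a| :=
      (hlip c).trans (by nlinarith [abs_nonneg (b - a)])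
    calc |deriv σ c - deriv σ a| * |b - a| ≤ K₂ * |b - a| * |b - a| := by
          nlinarith [abs_nonneg (b - a), abs_nonneg (deriv σ c - deriv σ a)]
      _ = K₂ * (b - a)^2 := by rw [mul_assoc, abs_mul_abs_self, sq]
  rcases lt_trichotomy a b with h | h | h
  · obtain ⟨c, hc, hs⟩ := exists_deriv_eq_slope σ h hσ1.continuous.continuousOn
      hσ1.differentiableOn
    refine key c ?_ ?_
    · rw [abs_of_pos (by linarith [hc.1] : (0:ℝ) < c - a),
        abs_of_pos (by linarith : (0:ℝ) < b - a)]
      linarith [hc.2]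
    · have hne : b - a ≠ 0 := sub_ne_zero_of_ne h.ne'
      field_simp at hs; linarith [hs]
  · subst h; simp
  · obtain ⟨c, hc, hs⟩ := exists_deriv_eq_slope σ h hσ1.continuous.continuousOn
      hσ1.differentiableOn
    refine key c ?_ ?_
    · rw [abs_of_neg (by linarith [hc.2] : c - a < 0),
        abs_of_neg (by linarith : b - a < 0)]
      linarith [hc.1]
    · have hne : a - b ≠ 0 := sub_ne_zero_of_ne h.ne'
      field_simp at hs; linarith [hs]

end AuxAC

/-- Proposition 3-(ii): almost convexity of the loss landscape. -/
theorem almost_convexity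
    (d m n : ℕ) (hm : 0 < m) (hn : 0 < n)
    (σ : ℝ → ℝ) (K₁ K₂ : ℝ)
    (hσ : ContDiff ℝ 2 σ)
    (hK₁ : ∀ z, |deriv σ z| ≤ K₁)
    (hK₂ : ∀ z, |deriv (deriv σ) z| ≤ K₂)
    (a : Fin m → ℝ) (ha : ∀ r, a r = 1 ∨ a r = -1)
    (x : Fin n → EuclideanSpace ℝ (Fin d)) (y : Fin n → ℝ)
    (hx : ∀ i, ‖x i‖ ≤ 1) (hy : ∀ i, y i = 1 ∨ y i = -1)
    (β : ℝ) (hβ0 : 0 ≤ β) (hβ1 : β < 1)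
    (Θ Θs : Fin m → EuclideanSpace ℝ (Fin d)) :
    eloss d m n β σ a x y Θ +
        ∑ r, ⟪gradL d m n β σ a x y Θ r, Θs r - Θ r⟫ ≤
      eloss d m n β σ a x y Θs +
        K₂ / (m : ℝ) ^ β * L1norm d m n β σ a x y Θ *
          nsq d m (fun r => Θs r - Θ r) := by
  classical
  have hK0 : 0 ≤ K₂ := (abs_nonneg _).trans (hK₂ 0)
  set c : ℝ := (m:ℝ) ^ (-β) with hc
  have hc0 : 0 ≤ c := Real.rpow_nonneg (Nat.cast_nonneg m) _
  set Δ : Fin m → EuclideanSpace ℝ (Fin d) := fun r => Θs r - Θ r with hΔ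
  set D : ℝ := nsq d m Δ with hD
  have hD0 : 0 ≤ D := Finset.sum_nonneg fun r _ => by positivity
  set g : Fin n → ℝ := fun i => gval d m n β σ a x y Θ i with hg
  set s : Fin n → ℝ :=
    fun i => c * ∑ r, a r * deriv σ ⟪Θ r, x i⟫ * ⟪x i, Δ r⟫ with hs
  -- Step 1: the gradient term
  have hgrad : ∑ r, ⟪gradL d m n β σ a x y Θ r, Θs r - Θ r⟫
      = (1/n : ℝ) * ∑ i, g i * s i := by
    have h1 : ∀ r, ⟪gradL d m n β σ a x y Θ r, Θs r - Θ r⟫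
        = (1/n : ℝ) * ∑ i, g i * (a r * c * deriv σ ⟪Θ r, x i⟫) * ⟪x i, Δ r⟫ := by
      intro r
      simp only [gradL]
      rw [real_inner_smul_left, sum_inner]
      congr 1
      refine Finset.sum_congr rfl fun i _ => ?_
      rw [real_inner_smul_left]
    simp_rw [h1]
    rw [← Finset.mul_sum, Finset.sum_comm]
    congr 1
    refine Finset.sum_congr rfl fun i _ => ?_
    simp only [hs]
    rw [Finset.mul_sum, Finset.mul_sum]
    refine Finset.sum_congr rfl fun r _ => ?_
    ring
  -- Step 2: second-order Taylor bound
  have htay : ∀ i, |fnet d m β σ a Θs (x i) - fnet d m β σ a Θ (x i) - s i|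
      ≤ c * (K₂ * D) := by
    intro i
    have hrew : fnet d m β σ a Θs (x i) - fnet d m β σ a Θ (x i) - s i
        = c * ∑ r, a r *
            (σ ⟪Θs r, x i⟫ - σ ⟪Θ r, x i⟫ - deriv σ ⟪Θ r, x i⟫ * ⟪x i, Δ r⟫) := by
      simp only [fnet, hs, ← hc]
      rw [Finset.mul_sum, Finset.mul_sum, Finset.mul_sum, Finset.mul_sum,
        ← Finset.sum_sub_distrib, ← Finset.sum_sub_distrib]
      refine Finset.sum_congr rfl fun r _ => ?_
      ring
    rw [hrew, abs_mul, abs_of_nonneg hc0]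
    refine mul_le_mul_of_nonneg_left ?_ hc0
    have h2 : ∀ r : Fin m, |a r *
        (σ ⟪Θs r, x i⟫ - σ ⟪Θ r, x i⟫ - deriv σ ⟪Θ r, x i⟫ * ⟪x i, Δ r⟫)|
        ≤ K₂ * ‖Δ r‖^2 := by
      intro r
      rw [abs_mul]
      have har : |a r| = 1 := by rcases ha r with h | h <;> simp [h]
      rw [har, one_mul]
      have hinner : ⟪x i, Δ r⟫ = ⟪Θs r, x i⟫ - ⟪Θ r, x i⟫ := by
        rw [real_inner_comm]
        show (inner ℝ (Θs r - Θ r) (x i) : ℝ) = _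
        rw [inner_sub_left]
      have htb := taylor_bd σ K₂ hσ hK₂ ⟪Θ r, x i⟫ ⟪Θs r, x i⟫
      rw [← hinner] at htb
      have habs : |⟪x i, Δ r⟫| ≤ ‖Δ r‖ := by
        calc |⟪x i, Δ r⟫| ≤ ‖x i‖ * ‖Δ r‖ := abs_real_inner_le_norm _ _
          _ ≤ 1 * ‖Δ r‖ := mul_le_mul_of_nonneg_right (hx i) (norm_nonneg _)
          _ = ‖Δ r‖ := one_mul _
      have hsq : ⟪x i, Δ r⟫^2 ≤ ‖Δ r‖^2 := by
        nlinarith [abs_nonneg ⟪x i, Δ r⟫, sq_abs ⟪x i, Δ r⟫, norm_nonneg (Δ r)]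
      calc |σ ⟪Θs r, x i⟫ - σ ⟪Θ r, x i⟫
            - deriv σ ⟪Θ r, x i⟫ * ⟪x i, Δ r⟫| ≤ K₂ * ⟪x i, Δ r⟫^2 := by
            simpa using htb
        _ ≤ K₂ * ‖Δ r‖^2 := mul_le_mul_of_nonneg_left hsq hK0
    calc |∑ r, a r * (σ ⟪Θs r, x i⟫ - σ ⟪Θ r, x i⟫
            - deriv σ ⟪Θ r, x i⟫ * ⟪x i, Δ r⟫)|
        ≤ ∑ r, |a r * (σ ⟪Θs r, x i⟫ - σ ⟪Θ r, x i⟫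
            - deriv σ ⟪Θ r, x i⟫ * ⟪x i, Δ r⟫)| := Finset.abs_sum_le_sum_abs _ _
      _ ≤ ∑ r, K₂ * ‖Δ r‖^2 := Finset.sum_le_sum fun r _ => h2 r
      _ = K₂ * D := by rw [hD, nsq, Finset.mul_sum]
  -- Step 3: convexity of the logistic loss
  have hconv : ∀ i,
      Real.log (1 + Real.exp (- y i * fnet d m β σ a Θ (x i)))
        + g i * (fnet d m β σ a Θs (x i) - fnet d m β σ a Θ (x i))
      ≤ Real.log (1 + Real.exp (- y i * fnet d m β σ a Θs (x i))) := by
    intro i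
    set F : ℝ := fnet d m β σ a Θ (x i) with hF
    set Fs : ℝ := fnet d m β σ a Θs (x i) with hFs
    have hp : (0:ℝ) < Real.exp (- y i * F) := Real.exp_pos _
    have hp2 : (0:ℝ) < 1 + Real.exp (- y i * F) := by positivity
    have hgi : g i = - y i *
        (Real.exp (- y i * F) / (1 + Real.exp (- y i * F))) := by
      simp only [hg, gval, ← hF]
      rw [show y i * F = -(- y i * F) by ring, Real.exp_neg,
        show (1:ℝ) + (Real.exp (- y i * F))⁻¹
            = (1 + Real.exp (- y i * F)) / Real.exp (- y i * F) by
              field_simp; ring,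
        div_div_eq_mul_div, mul_div_assoc]
    have hlt := logistic_tangent (- y i * F) (- y i * Fs)
    have hmid : g i * (Fs - F)
        = Real.exp (- y i * F) / (1 + Real.exp (- y i * F))
          * ((- y i * Fs) - (- y i * F)) := by
      rw [hgi]; ring
    linarith
  -- Step 4: combine pointwise
  have hmain : ∀ i,
      Real.log (1 + Real.exp (- y i * fnet d m β σ a Θ (x i))) + g i * s i
      ≤ Real.log (1 + Real.exp (- y i * fnet d m β σ a Θs (x i)))
        + |g i| * (c * (K₂ * D)) := by
    intro i
    have h1 := hconv i
    have h2 := htay i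
    have h3 : |g i * (s i - (fnet d m β σ a Θs (x i) - fnet d m β σ a Θ (x i)))|
        ≤ |g i| * (c * (K₂ * D)) := by
      rw [abs_mul]
      refine mul_le_mul_of_nonneg_left ?_ (abs_nonneg _)
      rw [abs_sub_comm]
      exact h2
    have h4 := neg_abs_le (g i * (s i - (fnet d m β σ a Θs (x i) - fnet d m β σ a Θ (x i))))
    have h5 := le_abs_self (g i * (s i - (fnet d m β σ a Θs (x i) - fnet d m β σ a Θ (x i))))
    nlinarith [h1, h3, h5]
  -- Step 5: sum up
  have hsum : ∑ i, (Real.log (1 + Real.exp (- y i * fnet d m β σ a Θ (x i))) + g i * s i)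
      ≤ ∑ i, (Real.log (1 + Real.exp (- y i * fnet d m β σ a Θs (x i)))
        + |g i| * (c * (K₂ * D))) := Finset.sum_le_sum fun i _ => hmain i
  have hn0 : (0:ℝ) ≤ 1 / n := by positivity
  have hfinal := mul_le_mul_of_nonneg_left hsum hn0
  rw [hgrad]
  have hlhs : eloss d m n β σ a x y Θ + (1/n : ℝ) * ∑ i, g i * s i
      = (1/n : ℝ) * ∑ i, (Real.log (1 + Real.exp (- y i * fnet d m β σ a Θ (x i)))
          + g i * s i) := by
    rw [eloss, Finset.sum_add_distrib, mul_add]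
  have hrhs : (1/n : ℝ) * ∑ i, (Real.log (1 + Real.exp (- y i * fnet d m β σ a Θs (x i)))
          + |g i| * (c * (K₂ * D)))
      = eloss d m n β σ a x y Θs
        + K₂ / (m : ℝ) ^ β * L1norm d m n β σ a x y Θ * D := by
    rw [Finset.sum_add_distrib, mul_add, eloss]
    congr 1
    have hsum2 : ∑ i, |g i| * (c * (K₂ * D)) = (∑ i, |g i|) * (c * (K₂ * D)) := by
      rw [Finset.sum_mul]
    rw [hsum2, L1norm]
    have hcc : c = ((m : ℝ) ^ β)⁻¹ := by
      rw [hc, Real.rpow_neg (Nat.cast_nonneg m)]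
    rw [hcc]
    simp only [hg]
    field_simp
  calc eloss d m n β σ a x y Θ + (1/n : ℝ) * ∑ i, g i * s i
      = (1/n : ℝ) * ∑ i, (Real.log (1 + Real.exp (- y i * fnet d m β σ a Θ (x i)))
          + g i * s i) := hlhs
    _ ≤ (1/n : ℝ) * ∑ i, (Real.log (1 + Real.exp (- y i * fnet d m β σ a Θs (x i)))
          + |g i| * (c * (K₂ * D))) := hfinal
    _ = eloss d m n β σ a x y Θs
        + K₂ / (m : ℝ) ^ β * L1norm d m n β σ a x y Θ * D := hrhs
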